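/- Assume s : [0,1]² → Ï² is a Borel-measurable selection of P⁻¹ (P the square of the projection p : Ï → [0,1]), and let Z_{01} ∪ Z_{10} be the set of z with s(z) ∈ (Ï_0 × Ï_1) ∪ (Ï_1 × Ï_0). Then for every b ∈ ℝ, the intersection of the diagonal line Γ^b = {⟨x,y⟩ : y − x = b} with Z_{01} ∪ Z_{10} is at most countable. -/

import Mathlib

/-- The split interval: `[0,1] × {0,1}` with the lexicographic order. -/
abbrev SplitInterval : Type := Set.Icc (0:ℝ) 1 ×ₗ Bool

instance : TopologicalSpace SplitInterval := Preorder.topology SplitInterval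

instance : OrderTopology SplitInterval := ⟨rfl⟩

/-- The projection `⟨x,i⟩ ↦ x` of the split interval onto the unit interval. -/
def splitProj : SplitInterval → Set.Icc (0:ℝ) 1 := fun a => (ofLex a).1

/-- The square `P = p × p` of the projection `p`. -/
def splitProjSq : SplitInterval × SplitInterval → Set.Icc (0:ℝ) 1 × Set.Icc (0:ℝ) 1 :=
  fun z => (splitProj z.1, splitProj z.2)

open Cardinal in
/-- If `s` is a Borel-measurable selection of `P⁻¹`, then for every
`b ∈ ℝ` the intersection of the line `y - x = b` with `Z₀₁ ∪ Z₁₀` is at most countable. -/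
theorem line_inter_Z01_union_Z10_countable
    (s : Set.Icc (0:ℝ) 1 × Set.Icc (0:ℝ) 1 → SplitInterval × SplitInterval)
    (hsel : ∀ z, splitProjSq (s z) = z)
    (hBorel : ∀ U : Set (SplitInterval × SplitInterval), IsOpen U → MeasurableSet (s ⁻¹' U))
    (b : ℝ) :
    Set.Countable {z : Set.Icc (0:ℝ) 1 × Set.Icc (0:ℝ) 1 |
      (z.2 : ℝ) - (z.1 : ℝ) = b ∧
      (((ofLex (s z).1).2 = false ∧ (ofLex (s z).2).2 = true) ∨
        ((ofLex (s z).1).2 = true ∧ (ofLex (s z).2).2 = false))} := by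
  classical
  set A : Set (Set.Icc (0:ℝ) 1 × Set.Icc (0:ℝ) 1) := {z : Set.Icc (0:ℝ) 1 × Set.Icc (0:ℝ) 1 |
      (z.2 : ℝ) - (z.1 : ℝ) = b ∧
      (((ofLex (s z).1).2 = false ∧ (ofLex (s z).2).2 = true) ∨
        ((ofLex (s z).1).2 = true ∧ (ofLex (s z).2).2 = false))} with hA
  -- coordinates of the selection
  have hco1 : ∀ z : Set.Icc (0:ℝ) 1 × Set.Icc (0:ℝ) 1, (ofLex (s z).1).1 = z.1 := fun z => congrArg Prod.fst (hsel z)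
  have hco2 : ∀ z : Set.Icc (0:ℝ) 1 × Set.Icc (0:ℝ) 1, (ofLex (s z).2).1 = z.2 := fun z => congrArg Prod.snd (hsel z)
  -- the line is measurable
  have hlineM : MeasurableSet {z : Set.Icc (0:ℝ) 1 × Set.Icc (0:ℝ) 1 | (z.2 : ℝ) - (z.1 : ℝ) = b} := by
    have hc : Continuous fun z : Set.Icc (0:ℝ) 1 × Set.Icc (0:ℝ) 1 => (z.2 : ℝ) - (z.1 : ℝ) :=
      (continuous_subtype_val.comp continuous_snd).sub
        (continuous_subtype_val.comp continuous_fst)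
    have : {z : Set.Icc (0:ℝ) 1 × Set.Icc (0:ℝ) 1 | (z.2 : ℝ) - (z.1 : ℝ) = b}
        = (fun z : Set.Icc (0:ℝ) 1 × Set.Icc (0:ℝ) 1 => (z.2 : ℝ) - (z.1 : ℝ)) ⁻¹' {b} := rfl
    rw [this]
    exact (isClosed_singleton.preimage hc).measurableSet
  -- KEY: every subset of A is measurable
  have key : ∀ S : Set (Set.Icc (0:ℝ) 1 × Set.Icc (0:ℝ) 1), S ⊆ A → MeasurableSet S := by
    intro S hS
    -- an open box isolating `s z` among points of `s` applied to the line
    let box : (Set.Icc (0:ℝ) 1 × Set.Icc (0:ℝ) 1) → Set (SplitInterval × SplitInterval) := fun z =>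
      if (ofLex (s z).1).2 = false
        then Set.Iio (toLex (z.1, true)) ×ˢ Set.Ioi (toLex (z.2, false))
        else Set.Ioi (toLex (z.1, false)) ×ˢ Set.Iio (toLex (z.2, true))
    have boxOpen : ∀ z, IsOpen (box z) := by
      intro z
      dsimp only [box]
      split
      · exact isOpen_Iio.prod isOpen_Ioi
      · exact isOpen_Ioi.prod isOpen_Iio
    have hVopen : IsOpen (⋃ z ∈ S, box z) := isOpen_biUnion fun z _ => boxOpen z
    have hSeq : S = s ⁻¹' (⋃ z ∈ S, box z) ∩ {z : Set.Icc (0:ℝ) 1 × Set.Icc (0:ℝ) 1 | (z.2 : ℝ) - (z.1 : ℝ) = b} := by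
      apply Set.Subset.antisymm
      · intro z hz
        have hzA := hS hz
        refine ⟨Set.mem_biUnion hz ?_, hzA.1⟩
        rcases hzA.2 with ⟨hf, hg⟩ | ⟨hf, hg⟩
        · have : box z = Set.Iio (toLex (z.1, true)) ×ˢ Set.Ioi (toLex (z.2, false)) :=
            if_pos hf
          rw [this]
          constructor
          · exact (Prod.Lex.lt_iff (x := (s z).1) (y := toLex (z.1, true))).mpr
              (Or.inr ⟨hco1 z, by rw [hf]; exact Bool.false_lt_true⟩)
          · exact (Prod.Lex.lt_iff (x := toLex (z.2, false)) (y := (s z).2)).mpr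
              (Or.inr ⟨(hco2 z).symm, by rw [hg]; exact Bool.false_lt_true⟩)
        · have : box z = Set.Ioi (toLex (z.1, false)) ×ˢ Set.Iio (toLex (z.2, true)) := by
            exact if_neg (by simp [hf])
          rw [this]
          constructor
          · exact (Prod.Lex.lt_iff (x := toLex (z.1, false)) (y := (s z).1)).mpr
              (Or.inr ⟨(hco1 z).symm, by rw [hf]; exact Bool.false_lt_true⟩)
          · exact (Prod.Lex.lt_iff (x := (s z).2) (y := toLex (z.2, true))).mpr
              (Or.inr ⟨hco2 z, by rw [hg]; exact Bool.false_lt_true⟩)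
      · rintro w ⟨hwV, hwline⟩
        obtain ⟨z, hzS, hwbox⟩ := Set.mem_iUnion₂.mp hwV
        have hzline : (z.2 : ℝ) - (z.1 : ℝ) = b := (hS hzS).1
        have hwl : (w.2 : ℝ) - (w.1 : ℝ) = b := hwline
        -- in either case the box forces w = z
        have hwz : w = z := by
          by_cases hf : (ofLex (s z).1).2 = false
          · rw [show box z = Set.Iio (toLex (z.1, true)) ×ˢ Set.Ioi (toLex (z.2, false))
              from if_pos hf] at hwbox
            have h1 : (w.1 : ℝ) ≤ (z.1 : ℝ) := by
              rcases (Prod.Lex.lt_iff (x := (s w).1) (y := toLex (z.1, true))).mp hwbox.1 with h | h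
              · rw [hco1 w] at h; exact (Subtype.coe_lt_coe.mpr h).le
              · rw [hco1 w] at h; exact le_of_eq (congrArg _ h.1)
            have h2 : (z.2 : ℝ) ≤ (w.2 : ℝ) := by
              rcases (Prod.Lex.lt_iff (x := toLex (z.2, false)) (y := (s w).2)).mp hwbox.2 with h | h
              · rw [hco2 w] at h; exact (Subtype.coe_lt_coe.mpr h).le
              · have := h.1; rw [hco2 w] at this; exact le_of_eq (congrArg _ this)
            exact Prod.ext (Subtype.ext (by linarith)) (Subtype.ext (by linarith))
          · rw [show box z = Set.Ioi (toLex (z.1, false)) ×ˢ Set.Iio (toLex (z.2, true))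
              from if_neg hf] at hwbox
            have h1 : (z.1 : ℝ) ≤ (w.1 : ℝ) := by
              rcases (Prod.Lex.lt_iff (x := toLex (z.1, false)) (y := (s w).1)).mp hwbox.1 with h | h
              · rw [hco1 w] at h; exact (Subtype.coe_lt_coe.mpr h).le
              · have := h.1; rw [hco1 w] at this; exact le_of_eq (congrArg _ this)
            have h2 : (w.2 : ℝ) ≤ (z.2 : ℝ) := by
              rcases (Prod.Lex.lt_iff (x := (s w).2) (y := toLex (z.2, true))).mp hwbox.2 with h | h
              · rw [hco2 w] at h; exact (Subtype.coe_lt_coe.mpr h).le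
              · rw [hco2 w] at h; exact le_of_eq (congrArg _ h.1)
            exact Prod.ext (Subtype.ext (by linarith)) (Subtype.ext (by linarith))
        rw [hwz]; exact hzS
    rw [hSeq]
    exact (hBorel _ hVopen).inter hlineM
  -- Cardinality argument
  by_contra hAnc
  have hAm : MeasurableSet A := key A Set.Subset.rfl
  haveI : StandardBorelSpace A := hAm.standardBorel
  have hnc : ¬ Countable A := by
    rwa [Set.countable_coe_iff]
  let e := PolishSpace.measurableEquivNatBoolOfNotCountable (α := A) hnc
  have hcardA : #A = 𝔠 := by
    rw [Cardinal.mk_congr e.toEquiv]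
    simp [Cardinal.mk_arrow, Cardinal.two_power_aleph0]
  -- every subset of A gives a distinct measurable set
  have hinj : Function.Injective
      (fun Sx : Set A => (⟨Subtype.val '' Sx,
        key _ (by rintro _ ⟨a, _, rfl⟩; exact a.2)⟩ : {t : Set (Set.Icc (0:ℝ) 1 × Set.Icc (0:ℝ) 1) // MeasurableSet t})) := by
    intro S1 S2 h
    exact (Set.image_injective.mpr Subtype.val_injective)
      (congrArg Subtype.val h)
  have h1 : (2 : Cardinal) ^ #A ≤ #{t : Set (Set.Icc (0:ℝ) 1 × Set.Icc (0:ℝ) 1) // MeasurableSet t} := by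
    rw [← Cardinal.mk_set]
    exact Cardinal.mk_le_of_injective hinj
  have h2 : #{t : Set (Set.Icc (0:ℝ) 1 × Set.Icc (0:ℝ) 1) // MeasurableSet t} ≤ 𝔠 := by
    obtain ⟨g, gct, hgen⟩ :=
      MeasurableSpace.CountablyGenerated.isCountablyGenerated (α := Set.Icc (0:ℝ) 1 × Set.Icc (0:ℝ) 1)
    have hiff : ∀ t : Set (Set.Icc (0:ℝ) 1 × Set.Icc (0:ℝ) 1), MeasurableSet t ↔
        @MeasurableSet (Set.Icc (0:ℝ) 1 × Set.Icc (0:ℝ) 1) (MeasurableSpace.generateFrom g) t := by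
      intro t; rw [← hgen]
    have hle : #g ≤ 𝔠 := gct.le_aleph0.trans Cardinal.aleph0_le_continuum
    calc #{t : Set (Set.Icc (0:ℝ) 1 × Set.Icc (0:ℝ) 1) // MeasurableSet t}
        = #{t : Set (Set.Icc (0:ℝ) 1 × Set.Icc (0:ℝ) 1) // @MeasurableSet (Set.Icc (0:ℝ) 1 × Set.Icc (0:ℝ) 1) (MeasurableSpace.generateFrom g) t} :=
          Cardinal.mk_congr (Equiv.subtypeEquivRight hiff)
      _ ≤ 𝔠 := MeasurableSpace.cardinal_measurableSet_le_continuum hle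
  rw [hcardA] at h1
  exact absurd (h1.trans h2) (not_le.mpr (Cardinal.cantor 𝔠))
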